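/- Let A be a generalised Poisson affine space over a field k of characteristic zero, so A = ⊕_{λ∈Λ} A_λ is Poisson graded by its weight spaces. Then every nonzero Poisson ideal I of A contains a nonzero homogeneous element, i.e. a nonzero element of some weight space A_λ. -/

import Mathlib

/-- A Poisson bracket on a commutative `k`-algebra `A`: a `k`-bilinear Lie bracket
satisfying the Leibniz rule. -/
structure IsPoissonBracket (k : Type*) (A : Type*) [CommRing k] [CommRing A] [Algebra k A]
    (P : A → A → A) : Prop where
  add_left : ∀ a b c : A, P (a + b) c = P a c + P b c
  smul_left : ∀ (r : k) (a b : A), P (r • a) b = r • P a b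
  lie_skew : ∀ a b : A, P a b = - P b a
  jacobi : ∀ a b c : A, P a (P b c) + P b (P c a) + P c (P a b) = 0
  leibniz : ∀ a b c : A, P (a * b) c = a * P b c + b * P a c

set_option linter.unusedSectionVars false
namespace PoissonAux

variable {k A : Type*} [Field k] [CharZero k] [CommRing A] [IsDomain A] [Algebra k A]
variable {P : A → A → A}

theorem padd_right (hP : IsPoissonBracket k A P) (a b c : A) : P a (b + c) = P a b + P a c := by
  rw [hP.lie_skew a, hP.add_left, hP.lie_skew b a, hP.lie_skew c a]; ring

theorem pzero_right (hP : IsPoissonBracket k A P) (a : A) : P a 0 = 0 := by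
  have h := padd_right hP a 0 0
  rw [add_zero] at h
  exact (add_eq_right.mp h.symm)

theorem psmul_right (hP : IsPoissonBracket k A P) (r : k) (a b : A) :
    P a (r • b) = r • P a b := by
  rw [hP.lie_skew a, hP.smul_left, hP.lie_skew b a]; rw [smul_neg, neg_neg]

theorem pneg_right (hP : IsPoissonBracket k A P) (a b : A) : P a (-b) = - P a b := by
  have h := padd_right hP a b (-b)
  rw [add_neg_cancel, pzero_right hP] at h
  exact eq_neg_of_add_eq_zero_right h.symm

theorem pleib_right (hP : IsPoissonBracket k A P) (a b c : A) :
    P a (b * c) = b * P a c + c * P a b := by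
  rw [hP.lie_skew a, hP.leibniz, hP.lie_skew b a, hP.lie_skew c a]; ring

/-- `P a` bundled as an additive hom. -/
def pHom (hP : IsPoissonBracket k A P) (a : A) : A →+ A :=
  AddMonoidHom.mk' (P a) (padd_right hP a)

theorem psum_right (hP : IsPoissonBracket k A P) (a : A) {ι : Type*} (s : Finset ι)
    (f : ι → A) : P a (∑ i ∈ s, f i) = ∑ i ∈ s, P a (f i) :=
  map_sum (pHom hP a) f s

section Weights

variable {n : ℕ} {x : Fin n → A} {l : Fin n → A → A}

theorem l_add (hP : IsPoissonBracket k A P) (hx : ∀ (i : Fin n) (b : A), P b (x i) = l i b * x i)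
    (hxne : ∀ i : Fin n, x i ≠ 0) (i : Fin n) (a b : A) :
    l i (a + b) = l i a + l i b := by
  apply mul_right_cancel₀ (hxne i)
  rw [← hx i (a + b), hP.add_left, hx, hx, add_mul]

theorem l_zero (hP : IsPoissonBracket k A P) (hx : ∀ (i : Fin n) (b : A), P b (x i) = l i b * x i)
    (hxne : ∀ i : Fin n, x i ≠ 0) (i : Fin n) : l i 0 = 0 := by
  have h := l_add hP hx hxne i 0 0
  rw [add_zero] at h
  exact (add_eq_right.mp h.symm)

theorem l_smul (hP : IsPoissonBracket k A P) (hx : ∀ (i : Fin n) (b : A), P b (x i) = l i b * x i)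
    (hxne : ∀ i : Fin n, x i ≠ 0) (i : Fin n) (r : k) (a : A) :
    l i (r • a) = r • l i a := by
  apply mul_right_cancel₀ (hxne i)
  rw [← hx i (r • a), hP.smul_left, hx, smul_mul_assoc]

theorem l_mul (hP : IsPoissonBracket k A P) (hx : ∀ (i : Fin n) (b : A), P b (x i) = l i b * x i)
    (hxne : ∀ i : Fin n, x i ≠ 0) (i : Fin n) (a b : A) :
    l i (a * b) = a * l i b + b * l i a := by
  apply mul_right_cancel₀ (hxne i)
  rw [← hx i (a * b), hP.leibniz, hx, hx]; ring

/-- `l j` bundled as an additive hom. -/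
def lHom (hP : IsPoissonBracket k A P) (hx : ∀ (i : Fin n) (b : A), P b (x i) = l i b * x i)
    (hxne : ∀ i : Fin n, x i ≠ 0) (j : Fin n) : A →+ A :=
  AddMonoidHom.mk' (l j) (l_add hP hx hxne j)

/-- Key identity: `l j` interacts with the bracket. -/
theorem l_bracket (hP : IsPoissonBracket k A P)
    (hx : ∀ (i : Fin n) (b : A), P b (x i) = l i b * x i)
    (hxne : ∀ i : Fin n, x i ≠ 0) (j : Fin n) (u b : A) :
    l j (P u b) = P u (l j b) - P b (l j u) := by
  apply mul_right_cancel₀ (hxne j)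
  have jac := hP.jacobi u b (x j)
  rw [hx j b, hP.lie_skew (x j) u, hx j u, hP.lie_skew (x j) (P u b), hx j (P u b),
    pleib_right hP, pneg_right hP, pleib_right hP, hx j u, hx j b] at jac
  linear_combination -jac

/-- The weight function of the exponent vector `c`. -/
def Lw (l : Fin n → A → A) (c : Fin n → ℕ) (b : A) : A := ∑ i, c i • l i b

theorem Lw_add (hP : IsPoissonBracket k A P)
    (hx : ∀ (i : Fin n) (b : A), P b (x i) = l i b * x i)
    (hxne : ∀ i : Fin n, x i ≠ 0) (c : Fin n → ℕ) (a b : A) :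
    Lw l c (a + b) = Lw l c a + Lw l c b := by
  simp only [Lw, l_add hP hx hxne, smul_add, Finset.sum_add_distrib]

theorem Lw_zero (hP : IsPoissonBracket k A P)
    (hx : ∀ (i : Fin n) (b : A), P b (x i) = l i b * x i)
    (hxne : ∀ i : Fin n, x i ≠ 0) (c : Fin n → ℕ) :
    Lw l c 0 = 0 := by
  simp only [Lw, l_zero hP hx hxne, smul_zero, Finset.sum_const_zero]

theorem Lw_addc (l : Fin n → A → A) (c c' : Fin n → ℕ) (b : A) :
    Lw l (c + c') b = Lw l c b + Lw l c' b := by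
  simp only [Lw, Pi.add_apply, add_smul, Finset.sum_add_distrib]

theorem Lw_zeroc (l : Fin n → A → A) (b : A) : Lw l (0 : Fin n → ℕ) b = 0 := by
  simp [Lw]

theorem l_Lw (hP : IsPoissonBracket k A P)
    (hx : ∀ (i : Fin n) (b : A), P b (x i) = l i b * x i)
    (hxne : ∀ i : Fin n, x i ≠ 0)
    (hcomm : ∀ (i j : Fin n) (a : A), l i (l j a) = l j (l i a))
    (j : Fin n) (c : Fin n → ℕ) (u : A) :
    l j (Lw l c u) = Lw l c (l j u) := by
  rw [Lw, Lw,
    show l j (∑ i : Fin n, c i • l i u) = ∑ i : Fin n, l j (c i • l i u) from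
      map_sum (lHom hP hx hxne j) _ _]
  refine Finset.sum_congr rfl fun i _ => ?_
  rw [show l j (c i • l i u) = c i • l j (l i u) from map_nsmul (lHom hP hx hxne j) _ _, hcomm]

/-- The weight space of `c` as a `k`-submodule. -/
def Hw (hP : IsPoissonBracket k A P) (l : Fin n → A → A) (c : Fin n → ℕ) : Submodule k A where
  carrier := {h | ∀ b, P b h = Lw l c b * h}
  add_mem' := by
    intro u v hu hv b
    rw [padd_right hP, hu b, hv b, mul_add]
  zero_mem' := by
    intro b
    rw [pzero_right hP, mul_zero]
  smul_mem' := by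
    intro r u hu b
    rw [psmul_right hP, hu b, mul_smul_comm]

theorem mem_Hw {hP : IsPoissonBracket k A P} {l : Fin n → A → A} {c : Fin n → ℕ} {h : A} :
    h ∈ Hw hP l c ↔ ∀ b, P b h = Lw l c b * h := Iff.rfl

theorem Hw_congr {hP : IsPoissonBracket k A P} {l : Fin n → A → A} {c c' : Fin n → ℕ}
    (h : ∀ b, Lw l c b = Lw l c' b) {u : A} (hu : u ∈ Hw hP l c) : u ∈ Hw hP l c' := by
  intro b; rw [← h b]; exact hu b

theorem Hw_mul {hP : IsPoissonBracket k A P} {l : Fin n → A → A} {c c' : Fin n → ℕ}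
    {u v : A} (hu : u ∈ Hw hP l c) (hv : v ∈ Hw hP l c') : u * v ∈ Hw hP l (c + c') := by
  intro b
  rw [pleib_right hP, hu b, hv b, Lw_addc]; ring

theorem Hw_one {hP : IsPoissonBracket k A P} {l : Fin n → A → A} :
    (1 : A) ∈ Hw hP l (0 : Fin n → ℕ) := by
  intro b
  have h : P b ((1 : A) * 1) = 1 * P b 1 + 1 * P b 1 := pleib_right hP b 1 1
  rw [mul_one, one_mul] at h
  rw [add_eq_right.mp h.symm, Lw_zeroc, zero_mul]

theorem Hw_x {hP : IsPoissonBracket k A P}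
    (hx : ∀ (i : Fin n) (b : A), P b (x i) = l i b * x i) (i : Fin n) :
    x i ∈ Hw hP l (Pi.single i 1) := by
  intro b
  rw [hx i b]
  congr 1
  rw [Lw, Finset.sum_eq_single i]
  · rw [Pi.single_eq_same, one_smul]
  · intro j _ hj
    rw [Pi.single_eq_of_ne hj, zero_smul]
  · intro h; exact absurd (Finset.mem_univ i) h

theorem l_Hw {hP : IsPoissonBracket k A P}
    (hx : ∀ (i : Fin n) (b : A), P b (x i) = l i b * x i)
    (hxne : ∀ i : Fin n, x i ≠ 0)
    (hcomm : ∀ (i j : Fin n) (a : A), l i (l j a) = l j (l i a))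
    (j : Fin n) {c : Fin n → ℕ} {b : A} (hb : b ∈ Hw hP l c) : l j b ∈ Hw hP l c := by
  intro u
  have h1 : l j (P u b) = P u (l j b) - P b (l j u) := l_bracket hP hx hxne j u b
  have h2 : P u b = Lw l c u * b := hb u
  have h3 : P (l j u) b = Lw l c (l j u) * b := hb (l j u)
  have h4 : P b (l j u) = - (Lw l c (l j u) * b) := by rw [hP.lie_skew, h3]
  have h5 : l j (Lw l c u * b) = Lw l c u * l j b + b * l j (Lw l c u) :=
    l_mul hP hx hxne j _ _
  have h6 : l j (Lw l c u) = Lw l c (l j u) := l_Lw hP hx hxne hcomm j c u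
  have : l j (P u b) = P u (l j b) - P b (l j u) := h1
  rw [h2, h5, h6, h4] at this
  linear_combination -this

theorem Lw_Hw {hP : IsPoissonBracket k A P}
    (hx : ∀ (i : Fin n) (b : A), P b (x i) = l i b * x i)
    (hxne : ∀ i : Fin n, x i ≠ 0)
    (hcomm : ∀ (i j : Fin n) (a : A), l i (l j a) = l j (l i a))
    (c' c : Fin n → ℕ) {b : A} (hb : b ∈ Hw hP l c) : Lw l c' b ∈ Hw hP l c := by
  rw [Lw]
  exact Submodule.sum_mem _ fun i _ => nsmul_mem (l_Hw hx hxne hcomm i hb) _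

theorem mem_iSup_Hw (hP : IsPoissonBracket k A P)
    (hx : ∀ (i : Fin n) (b : A), P b (x i) = l i b * x i)
    (hgen : Algebra.adjoin k (Set.range x) = ⊤) (a : A) :
    a ∈ ⨆ c : Fin n → ℕ, Hw hP l c := by
  set T := ⨆ c : Fin n → ℕ, Hw hP l c with hT
  have hmem : ∀ (c : Fin n → ℕ) (u : A), u ∈ Hw hP l c → u ∈ T := fun c u hu =>
    Submodule.mem_iSup_of_mem c hu
  have hmul : ∀ u, u ∈ T → ∀ v, v ∈ T → u * v ∈ T := by
    intro u hu
    refine Submodule.iSup_induction' _ (motive := fun u _ => ∀ v, v ∈ T → u * v ∈ T)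
      ?_ ?_ ?_ hu
    · intro c u hu v hv
      refine Submodule.iSup_induction' _ (motive := fun v _ => u * v ∈ T) ?_ ?_ ?_ hv
      · intro d v hv; exact hmem _ _ (Hw_mul hu hv)
      · show u * 0 ∈ T; rw [mul_zero]; exact T.zero_mem
      · intro y z _ _ hy' hz'; rw [mul_add]; exact T.add_mem hy' hz'
    · intro v _; rw [zero_mul]; exact T.zero_mem
    · intro y z _ _ hy' hz' v hv; rw [add_mul]; exact T.add_mem (hy' v hv) (hz' v hv)
  let S : Subalgebra k A :=
    { carrier := (T : Set A)
      mul_mem' := fun {a b} ha hb => hmul a ha b hb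
      one_mem' := hmem 0 1 Hw_one
      add_mem' := fun {a b} ha hb => T.add_mem ha hb
      zero_mem' := T.zero_mem
      algebraMap_mem' := fun r => by
        have h1 : algebraMap k A r = r • (1 : A) := Algebra.algebraMap_eq_smul_one r
        show algebraMap k A r ∈ T
        rw [h1]
        exact T.smul_mem r (hmem 0 1 Hw_one) }
  have hle : Algebra.adjoin k (Set.range x) ≤ S := by
    apply Algebra.adjoin_le
    rintro _ ⟨i, rfl⟩
    exact hmem _ _ (Hw_x hx i)
  rw [hgen] at hle
  exact hle (by trivial : a ∈ (⊤ : Subalgebra k A))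

theorem Lw_sep (hP : IsPoissonBracket k A P)
    (hx : ∀ (i : Fin n) (b : A), P b (x i) = l i b * x i)
    (hxne : ∀ i : Fin n, x i ≠ 0)
    (hgen : Algebra.adjoin k (Set.range x) = ⊤)
    (c c' : Fin n → ℕ) (hne : Lw l c ≠ Lw l c') :
    ∃ (d : Fin n → ℕ) (b : A), b ∈ Hw hP l d ∧ Lw l c b ≠ Lw l c' b := by
  by_contra hcon
  push_neg at hcon
  apply hne
  funext b
  have hb : b ∈ ⨆ c : Fin n → ℕ, Hw hP l c := mem_iSup_Hw hP hx hgen b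
  refine Submodule.iSup_induction' _ (motive := fun b _ => Lw l c b = Lw l c' b) ?_ ?_ ?_ hb
  · intro d u hu; exact hcon d u hu
  · show Lw l c 0 = Lw l c' 0
    rw [Lw_zero hP hx hxne, Lw_zero hP hx hxne]
  · intro y z _ _ h1 h2
    rw [Lw_add hP hx hxne, Lw_add hP hx hxne, h1, h2]

theorem indep (hP : IsPoissonBracket k A P)
    (hx : ∀ (i : Fin n) (b : A), P b (x i) = l i b * x i)
    (hxne : ∀ i : Fin n, x i ≠ 0)
    (hcomm : ∀ (i j : Fin n) (a : A), l i (l j a) = l j (l i a))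
    (hgen : Algebra.adjoin k (Set.range x) = ⊤) :
    ∀ (N : ℕ) (U : Finset (A → A)) (g : (A → A) → A) (c : (A → A) → Fin n → ℕ),
      U.card ≤ N →
      (∀ w ∈ U, g w ∈ Hw hP l (c w)) →
      (∀ w ∈ U, ∀ w' ∈ U, Lw l (c w) = Lw l (c w') → w = w') →
      (∑ w ∈ U, g w) = 0 → ∀ w ∈ U, g w = 0 := by
  classical
  intro N
  induction N with
  | zero =>
    intro U g c hcard _ _ _ w hw
    rw [Nat.le_zero, Finset.card_eq_zero] at hcard
    subst hcard
    simp at hw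
  | succ N ih =>
    intro U g c hcard hmem hinj hsum w hw
    by_cases h2 : 1 < U.card
    · obtain ⟨w₀, hw₀, w₁, hw₁, hne⟩ := Finset.one_lt_card.mp h2
      have hLne : Lw l (c w₀) ≠ Lw l (c w₁) := fun h => hne (hinj _ hw₀ _ hw₁ h)
      obtain ⟨d, b, hbH, hbne⟩ := Lw_sep hP hx hxne hgen _ _ hLne
      set h : (A → A) → A := fun w' => (Lw l (c w₀) b - Lw l (c w') b) * g w' with hh
      have hsum2 : ∑ w' ∈ U, h w' = 0 := by
        have e1 : ∑ w' ∈ U, h w' =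
            Lw l (c w₀) b * (∑ w' ∈ U, g w') - P b (∑ w' ∈ U, g w') := by
          rw [psum_right hP, Finset.mul_sum, ← Finset.sum_sub_distrib]
          refine Finset.sum_congr rfl fun w' hw' => ?_
          rw [hmem w' hw' b, hh]
          ring
        rw [e1, hsum, mul_zero, pzero_right hP, sub_zero]
      have hmem2 : ∀ w' ∈ U.erase w₀, h w' ∈ Hw hP l (d + c w') := by
        intro w' hw'
        have h1 : Lw l (c w₀) b - Lw l (c w') b ∈ Hw hP l d :=
          Submodule.sub_mem _ (Lw_Hw hx hxne hcomm _ _ hbH) (Lw_Hw hx hxne hcomm _ _ hbH)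
        exact Hw_mul h1 (hmem w' (Finset.mem_of_mem_erase hw'))
      have hinj2 : ∀ w' ∈ U.erase w₀, ∀ w'' ∈ U.erase w₀,
          Lw l (d + c w') = Lw l (d + c w'') → w' = w'' := by
        intro w' hw' w'' hw'' he
        apply hinj _ (Finset.mem_of_mem_erase hw') _ (Finset.mem_of_mem_erase hw'')
        funext b'
        have h3 := congrFun he b'
        rw [Lw_addc, Lw_addc] at h3
        exact add_left_cancel h3
      have hsum3 : ∑ w' ∈ U.erase w₀, h w' = 0 := by
        have h0 : h w₀ = 0 := by rw [hh]; simp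
        rw [← Finset.add_sum_erase U h hw₀, h0, zero_add] at hsum2
        exact hsum2
      have hcard2 : (U.erase w₀).card ≤ N := by
        have := Finset.card_erase_of_mem hw₀; omega
      have hzero := ih (U.erase w₀) h (fun w' => d + c w') hcard2 hmem2 hinj2 hsum3
      have hg1 : g w₁ = 0 := by
        have h4 := hzero w₁ (Finset.mem_erase.mpr ⟨hne.symm, hw₁⟩)
        rcases mul_eq_zero.mp h4 with h5 | h5
        · exact absurd (sub_eq_zero.mp h5) hbne
        · exact h5
      have hsum4 : ∑ w' ∈ U.erase w₁, g w' = 0 := by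
        rw [← Finset.add_sum_erase U g hw₁, hg1, zero_add] at hsum
        exact hsum
      have hcard4 : (U.erase w₁).card ≤ N := by
        have := Finset.card_erase_of_mem hw₁; omega
      have hzero2 := ih (U.erase w₁) g c hcard4
        (fun w' hw' => hmem _ (Finset.mem_of_mem_erase hw'))
        (fun w' hw' w'' hw'' => hinj _ (Finset.mem_of_mem_erase hw') _
          (Finset.mem_of_mem_erase hw'')) hsum4
      by_cases hww : w = w₁
      · rw [hww]; exact hg1
      · exact hzero2 w (Finset.mem_erase.mpr ⟨hww, hw⟩)
    · have huniq := Finset.card_le_one.mp (not_lt.mp h2)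
      have hU : U = {w} := Finset.eq_singleton_iff_unique_mem.mpr
        ⟨hw, fun y hy => huniq y hy w hw⟩
      rw [hU, Finset.sum_singleton] at hsum
      exact hsum

theorem exrep (hP : IsPoissonBracket k A P)
    (hx : ∀ (i : Fin n) (b : A), P b (x i) = l i b * x i)
    (hgen : Algebra.adjoin k (Set.range x) = ⊤) (a : A) :
    ∃ (U : Finset (A → A)) (g : (A → A) → A) (c : (A → A) → Fin n → ℕ),
      (∀ w ∈ U, g w ∈ Hw hP l (c w)) ∧ (∀ w ∈ U, Lw l (c w) = w) ∧
      a = ∑ w ∈ U, g w := by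
  classical
  have ha : a ∈ ⨆ c : Fin n → ℕ, Hw hP l c := mem_iSup_Hw hP hx hgen a
  refine Submodule.iSup_induction' _
    (motive := fun a _ => ∃ (U : Finset (A → A)) (g : (A → A) → A) (c : (A → A) → Fin n → ℕ),
      (∀ w ∈ U, g w ∈ Hw hP l (c w)) ∧ (∀ w ∈ U, Lw l (c w) = w) ∧
      a = ∑ w ∈ U, g w) ?_ ?_ ?_ ha
  · intro c₀ u hu
    refine ⟨{Lw l c₀}, fun _ => u, fun _ => c₀, ?_, ?_, ?_⟩
    · intro w _; exact hu
    · intro w hw; rw [Finset.mem_singleton] at hw; exact hw.symm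
    · simp
  · exact ⟨∅, fun _ => 0, fun _ => 0, by simp, by simp, by simp⟩
  · rintro y z _ _ ⟨U₁, g₁, c₁, hm₁, hwf₁, hs₁⟩ ⟨U₂, g₂, c₂, hm₂, hwf₂, hs₂⟩
    refine ⟨U₁ ∪ U₂, fun w => (if w ∈ U₁ then g₁ w else 0) + (if w ∈ U₂ then g₂ w else 0),
      fun w => if w ∈ U₁ then c₁ w else c₂ w, ?_, ?_, ?_⟩
    · intro w hw
      by_cases h1 : w ∈ U₁
      · simp only [h1, if_true]
        apply Submodule.add_mem
        · exact hm₁ w h1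
        · by_cases hc2 : w ∈ U₂
          · simp only [hc2, if_true]
            refine Hw_congr (fun b => ?_) (hm₂ w hc2)
            rw [show Lw l (c₂ w) = Lw l (c₁ w) from (hwf₂ w hc2).trans (hwf₁ w h1).symm]
          · simp only [hc2, if_false]; exact Submodule.zero_mem _
      · have hc2 : w ∈ U₂ := (Finset.mem_union.mp hw).resolve_left h1
        simp only [h1, if_false, hc2, if_true, zero_add]
        exact hm₂ w hc2
    · intro w hw
      by_cases h1 : w ∈ U₁
      · simp only [h1, if_true]; exact hwf₁ w h1
      · have hc2 : w ∈ U₂ := (Finset.mem_union.mp hw).resolve_left h1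
        simp only [h1, if_false]; exact hwf₂ w hc2
    · rw [Finset.sum_add_distrib, Finset.sum_ite_mem, Finset.sum_ite_mem,
        Finset.union_inter_cancel_left, Finset.union_inter_cancel_right, hs₁, hs₂]

end Weights

end PoissonAux

/-- In a generalised Poisson affine space, every nonzero Poisson ideal contains a
nonzero homogeneous element, i.e. a nonzero Poisson normal element whose weight lies in
the monoid generated by the weights of the generators. -/
theorem poisson_ideal_contains_homogeneous
    {k A : Type*} [Field k] [CharZero k] [CommRing A] [IsDomain A] [Algebra k A]
    (P : A → A → A) (hP : IsPoissonBracket k A P)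
    (n : ℕ) (x : Fin n → A) (l : Fin n → A → A)
    (hgen : Algebra.adjoin k (Set.range x) = ⊤)
    (hx : ∀ (i : Fin n) (b : A), P b (x i) = l i b * x i)
    (hxne : ∀ i : Fin n, x i ≠ 0)
    (hcomm : ∀ (i j : Fin n) (a : A), l i (l j a) = l j (l i a))
    (I : Ideal A) (hIP : ∀ a ∈ I, ∀ b : A, P b a ∈ I) (hIne : I ≠ ⊥) :
    ∃ a ∈ I, a ≠ 0 ∧ ∃ c : Fin n → ℕ,
      ∀ b : A, P b a = (∑ i : Fin n, c i • l i b) * a := by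
  classical
  open PoissonAux in
  -- the predicate for the minimality argument
  have hQex : ∃ s : ℕ, ∃ (a : A) (U : Finset (A → A)) (g : (A → A) → A)
      (c : (A → A) → Fin n → ℕ),
      a ∈ I ∧ a ≠ 0 ∧ U.card ≤ s ∧ (∀ w ∈ U, g w ∈ Hw hP l (c w)) ∧
      (∀ w ∈ U, ∀ w' ∈ U, Lw l (c w) = Lw l (c w') → w = w') ∧ a = ∑ w ∈ U, g w := by
    obtain ⟨a, haI, hane⟩ := Submodule.exists_mem_ne_zero_of_ne_bot hIne
    obtain ⟨U, g, c, hm, hwf, hs⟩ := exrep hP hx hgen a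
    refine ⟨U.card, a, U, g, c, haI, hane, le_refl _, hm, ?_, hs⟩
    intro w hw w' hw' he
    rw [← hwf w hw, ← hwf w' hw']
    exact he
  set s₀ := Nat.find hQex with hs₀
  obtain ⟨a, U, g, c, haI, hane, hcard, hmem, hinj, hsum⟩ := Nat.find_spec hQex
  by_cases h2 : 1 < U.card
  · -- derive a contradiction with minimality
    exfalso
    have h2s : 2 ≤ s₀ := le_trans h2 hcard
    obtain ⟨w₀, hw₀, w₁, hw₁, hne⟩ := Finset.one_lt_card.mp h2
    -- all pieces of a minimal representation are nonzero
    have hgne : ∀ w ∈ U, g w ≠ 0 := by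
      intro w hw hzw
      apply Nat.find_min hQex (show s₀ - 1 < s₀ by omega)
      have hcarde : (U.erase w).card ≤ s₀ - 1 := by
        have := Finset.card_erase_of_mem hw; omega
      refine ⟨a, U.erase w, g, c, haI, hane, hcarde,
        fun w' hw' => hmem _ (Finset.mem_of_mem_erase hw'),
        fun w' hw' w'' hw'' => hinj _ (Finset.mem_of_mem_erase hw') _
          (Finset.mem_of_mem_erase hw''), ?_⟩
      rw [← Finset.add_sum_erase U g hw, hzw, zero_add] at hsum
      exact hsum
    have hLne : Lw l (c w₀) ≠ Lw l (c w₁) := fun h => hne (hinj _ hw₀ _ hw₁ h)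
    obtain ⟨d, b, hbH, hbne⟩ := Lw_sep hP hx hxne hgen _ _ hLne
    set h : (A → A) → A := fun w' => (Lw l (c w₀) b - Lw l (c w') b) * g w' with hh
    set a' : A := Lw l (c w₀) b * a - P b a with ha'
    have ha'I : a' ∈ I := Submodule.sub_mem _ (I.mul_mem_left _ haI) (hIP a haI b)
    have ha's : a' = ∑ w' ∈ U, h w' := by
      rw [ha', hsum, psum_right hP, Finset.mul_sum, ← Finset.sum_sub_distrib]
      refine Finset.sum_congr rfl fun w' hw' => ?_
      rw [hmem w' hw' b, hh]
      ring
    have hmem2 : ∀ w' ∈ U.erase w₀, h w' ∈ Hw hP l (d + c w') := by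
      intro w' hw'
      have h1 : Lw l (c w₀) b - Lw l (c w') b ∈ Hw hP l d :=
        Submodule.sub_mem _ (Lw_Hw hx hxne hcomm _ _ hbH) (Lw_Hw hx hxne hcomm _ _ hbH)
      exact Hw_mul h1 (hmem w' (Finset.mem_of_mem_erase hw'))
    have hinj2 : ∀ w' ∈ U.erase w₀, ∀ w'' ∈ U.erase w₀,
        Lw l (d + c w') = Lw l (d + c w'') → w' = w'' := by
      intro w' hw' w'' hw'' he
      apply hinj _ (Finset.mem_of_mem_erase hw') _ (Finset.mem_of_mem_erase hw'')
      funext b'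
      have h3 := congrFun he b'
      rw [Lw_addc, Lw_addc] at h3
      exact add_left_cancel h3
    have h0 : h w₀ = 0 := by rw [hh]; simp
    have ha's2 : a' = ∑ w' ∈ U.erase w₀, h w' := by
      rw [ha's, ← Finset.add_sum_erase U h hw₀, h0, zero_add]
    -- a' is nonzero, by independence of weight spaces
    have ha'ne : a' ≠ 0 := by
      intro ha'0
      have hz := indep hP hx hxne hcomm hgen U.card U h
        (fun w' => d + c w') (le_refl _)
        (fun w' hw' => by
          have h1 : Lw l (c w₀) b - Lw l (c w') b ∈ Hw hP l d :=
            Submodule.sub_mem _ (Lw_Hw hx hxne hcomm _ _ hbH) (Lw_Hw hx hxne hcomm _ _ hbH)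
          exact Hw_mul h1 (hmem w' hw'))
        (fun w' hw' w'' hw'' he => by
          apply hinj _ hw' _ hw''
          funext b'
          have h3 := congrFun he b'
          rw [Lw_addc, Lw_addc] at h3
          exact add_left_cancel h3)
        (by rw [← ha's, ha'0])
      have h4 := hz w₁ hw₁
      rcases mul_eq_zero.mp h4 with h5 | h5
      · exact hbne (sub_eq_zero.mp h5)
      · exact hgne w₁ hw₁ h5
    -- contradiction with minimality
    apply Nat.find_min hQex (show s₀ - 1 < s₀ by omega)
    have hcarde : (U.erase w₀).card ≤ s₀ - 1 := by
      have := Finset.card_erase_of_mem hw₀; omega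
    exact ⟨a', U.erase w₀, h, fun w' => d + c w', ha'I, ha'ne, hcarde, hmem2, hinj2, ha's2⟩
  · -- the representation has at most one piece
    rcases Nat.lt_or_ge U.card 1 with h1 | h1
    · exfalso
      rw [Nat.lt_one_iff, Finset.card_eq_zero] at h1
      subst h1
      simp at hsum
      exact hane hsum
    · have hcard1 : U.card = 1 := le_antisymm (not_lt.mp h2) h1
      obtain ⟨w, hU⟩ := Finset.card_eq_one.mp hcard1
      subst hU
      rw [Finset.sum_singleton] at hsum
      refine ⟨a, haI, hane, c w, fun b => ?_⟩
      have := hmem w (Finset.mem_singleton_self w) b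
      rw [← hsum] at this
      exact this
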